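/- Let k ≥ 1 be an integer, let s be a complex number with σ = Re s > 1, and let α be a complex number with |α| < k. Then Σ'_{n∈ℕ, n≥1} |c_{n,k}(s)|·|α|^n/n! ≤ ζ(σ)·(1 − |α|/k)^{−|s|}, where ζ(σ) = Σ_{m≥1} m^{−σ} (a real series), |s| is the complex absolute value of s, and (1 − |α|/k)^{−|s|} is a real power (Real.rpow). -/

import Mathlib

noncomputable def zetaK (k : ℕ) (s : ℂ) : ℂ :=
  riemannZeta s - ∑ m ∈ Finset.Ico 1 k, (m : ℂ) ^ (-s)

noncomputable def c (n k : ℕ) (s : ℂ) : ℂ :=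
  (∏ j ∈ Finset.range n, (s + j)) * zetaK k (s + n)

open Finset

noncomputable def bcoef (a : ℝ) (n : ℕ) : ℝ := (∏ j ∈ Finset.range n, (a + j)) / n.factorial

lemma bcoef_zero (a : ℝ) : bcoef a 0 = 1 := by simp [bcoef]

lemma bcoef_nonneg {a : ℝ} (ha : 0 ≤ a) (n : ℕ) : 0 ≤ bcoef a n := by
  apply div_nonneg _ (by positivity)
  exact Finset.prod_nonneg fun j _ => by positivity

lemma bcoef_succ (a : ℝ) (n : ℕ) : ((n : ℝ) + 1) * bcoef a (n + 1) = (a + n) * bcoef a n := by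
  have h : ((n + 1).factorial : ℝ) = (n.factorial : ℝ) * ((n : ℝ) + 1) := by
    rw [Nat.factorial_succ]; push_cast; ring
  rw [bcoef, bcoef, Finset.prod_range_succ, h]
  have h1 : (n.factorial : ℝ) ≠ 0 := Nat.cast_ne_zero.mpr n.factorial_ne_zero
  have h2 : ((n : ℝ) + 1) ≠ 0 := by positivity
  field_simp

noncomputable def Spoly (a x : ℝ) (N : ℕ) : ℝ := ∑ n ∈ range (N + 1), bcoef a n * x ^ n
noncomputable def Dpoly (a x : ℝ) (N : ℕ) : ℝ :=
  ∑ n ∈ range N, ((n : ℝ) + 1) * bcoef a (n + 1) * x ^ n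

lemma hasDerivAt_Spoly (a : ℝ) (N : ℕ) (x : ℝ) :
    HasDerivAt (fun t => Spoly a t N) (Dpoly a x N) x := by
  induction N with
  | zero =>
    have he : (fun t => Spoly a t 0) = fun _ => bcoef a 0 := by
      funext t; simp [Spoly]
    rw [he]
    simpa [Dpoly] using hasDerivAt_const x (bcoef a 0)
  | succ N ih =>
    have h : HasDerivAt (fun t => Spoly a t N + bcoef a (N + 1) * t ^ (N + 1))
        (Dpoly a x N + bcoef a (N + 1) * (((N : ℝ) + 1) * x ^ N)) x := by
      apply ih.add
      have := (hasDerivAt_pow (N + 1) x).const_mul (bcoef a (N + 1))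
      refine this.congr_deriv ?_
      push_cast
      ring
    have he : (fun t => Spoly a t N + bcoef a (N + 1) * t ^ (N + 1))
        = fun t => Spoly a t (N + 1) := by
      funext t
      simp [Spoly, Finset.sum_range_succ]
    rw [he] at h
    convert h using 1
    simp [Dpoly, Finset.sum_range_succ]
    ring

lemma key_identity (a x : ℝ) (N : ℕ) :
    (1 - x) * Dpoly a x N = a * Spoly a x N - (a + N) * bcoef a N * x ^ N := by
  induction N with
  | zero => simp [Spoly, Dpoly, bcoef_zero]
  | succ N ih =>
    have hrec := bcoef_succ a N
    have hS : Spoly a x (N + 1) = Spoly a x N + bcoef a (N + 1) * x ^ (N + 1) := by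
      simp [Spoly, Finset.sum_range_succ]
    have hD : Dpoly a x (N + 1) = Dpoly a x N + ((N : ℝ) + 1) * bcoef a (N + 1) * x ^ N := by
      simp [Dpoly, Finset.sum_range_succ]
    rw [hS, hD, mul_add, ih]
    push_cast
    linear_combination (x ^ N) * hrec

lemma Spoly_le {a x : ℝ} (ha : 0 ≤ a) (hx0 : 0 ≤ x) (hx1 : x < 1) (N : ℕ) :
    Spoly a x N ≤ (1 - x) ^ (-a) := by
  set g : ℝ → ℝ := fun t => (1 - t) ^ a * Spoly a t N with hg
  have hderiv : ∀ t ∈ Set.Icc (0:ℝ) x, HasDerivAt g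
      ((1 - t) ^ (a - 1) * (-(a + N) * bcoef a N * t ^ N)) t := by
    intro t ht
    have ht1 : 0 < 1 - t := by
      have := ht.2
      linarith
    have h1 : HasDerivAt (fun u : ℝ => 1 - u) (-1) t := by
      simpa using (hasDerivAt_id t).const_sub 1
    have h2 : HasDerivAt (fun u : ℝ => (1 - u) ^ a) (-1 * a * (1 - t) ^ (a - 1)) t :=
      h1.rpow_const (Or.inl ht1.ne')
    have h3 := h2.mul (hasDerivAt_Spoly a N t)
    refine h3.congr_deriv ?_
    symm
    have hsplit : (1 - t) ^ a = (1 - t) ^ (a - 1) * (1 - t) := by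
      rw [Real.rpow_sub ht1, Real.rpow_one]
      field_simp
    rw [hsplit]
    linear_combination (-(1 - t) ^ (a - 1)) * key_identity a t N
  have hanti : AntitoneOn g (Set.Icc (0:ℝ) x) := by
    apply antitoneOn_of_deriv_nonpos (convex_Icc _ _)
    · intro t ht
      exact (hderiv t ht).continuousAt.continuousWithinAt
    · intro t ht
      rw [interior_Icc] at ht
      exact (hderiv t (Set.mem_Icc_of_Ioo ht)).differentiableAt.differentiableWithinAt
    · intro t ht
      rw [interior_Icc] at ht
      rw [(hderiv t (Set.mem_Icc_of_Ioo ht)).deriv]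
      have ht0 : (0:ℝ) ≤ t := le_of_lt ht.1
      have h1 : (0:ℝ) ≤ (1 - t) ^ (a - 1) := Real.rpow_nonneg (by linarith [ht.2, hx1]) _
      have h2 : (0:ℝ) ≤ (a + N) * bcoef a N * t ^ N := by
        have := bcoef_nonneg ha N
        positivity
      nlinarith
  have hgx : g x ≤ g 0 := hanti (Set.left_mem_Icc.mpr hx0) (Set.right_mem_Icc.mpr hx0) hx0
  have hg0 : g 0 = 1 := by
    have hS0 : Spoly a 0 N = 1 := by
      rw [Spoly, Finset.sum_eq_single 0]
      · simp [bcoef_zero]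
      · intro n _ hn
        simp [zero_pow hn]
      · simp
    simp [hg, hS0]
  rw [hg0] at hgx
  have hpos : (0:ℝ) < (1 - x) ^ a := Real.rpow_pos_of_pos (by linarith) a
  rw [Real.rpow_neg (by linarith), ← one_div]
  rw [le_div_iff₀ hpos]
  calc Spoly a x N * (1 - x) ^ a = g x := by rw [hg]; ring
  _ ≤ 1 := hgx


lemma zetaK_eq (k : ℕ) {w : ℂ} (hw : 1 < w.re) :
    zetaK k w = ∑' m : ℕ, ((m + k : ℕ) : ℂ) ^ (-w) := by
  have hwne : -w ≠ 0 := by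
    simp only [ne_eq, neg_eq_zero]
    rintro rfl
    norm_num at hw
  have hsum : Summable (fun n : ℕ => (n : ℂ) ^ (-w)) := by
    have := Complex.summable_one_div_nat_cpow.mpr hw
    refine this.congr fun n => ?_
    rw [Complex.cpow_neg, one_div]
  have key := Summable.sum_add_tsum_nat_add (f := fun n : ℕ => (n : ℂ) ^ (-w)) k hsum
  have hrange : ∑ i ∈ Finset.range k, ((i : ℂ)) ^ (-w)
      = ∑ m ∈ Finset.Ico 1 k, (m : ℂ) ^ (-w) := by
    rw [Finset.range_eq_Ico]
    refine (Finset.sum_subset (Finset.Ico_subset_Ico (Nat.zero_le 1) le_rfl) ?_).symm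
    intro x hx hnx
    have hx0 : x = 0 := by
      simp only [Finset.mem_Ico] at hx hnx; omega
    subst hx0
    rw [Nat.cast_zero, Complex.zero_cpow hwne]
  have hzeta : riemannZeta w = ∑' n : ℕ, (n : ℂ) ^ (-w) := by
    rw [zeta_eq_tsum_one_div_nat_cpow hw]
    refine tsum_congr fun n => ?_
    rw [Complex.cpow_neg, one_div]
  rw [zetaK, hzeta, ← key, hrange]
  push_cast
  ring

lemma hA_summable {σ : ℝ} (hσ : 1 < σ) :
    Summable (fun m : ℕ => ((m : ℝ) + 1) ^ (-σ)) := by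
  have h : Summable (fun n : ℕ => (n : ℝ) ^ (-σ)) :=
    Real.summable_nat_rpow.mpr (by linarith)
  have := (summable_nat_add_iff 1).mpr h
  refine this.congr fun n => ?_
  push_cast
  ring_nf

lemma tail_summable (k : ℕ) {r : ℝ} (hr : 1 < r) :
    Summable (fun m : ℕ => ((m + k : ℕ) : ℝ) ^ (-r)) := by
  have h : Summable (fun n : ℕ => (n : ℝ) ^ (-r)) :=
    Real.summable_nat_rpow.mpr (by linarith)
  exact (summable_nat_add_iff k).mpr h

lemma zetaK_abs_le (k : ℕ) (hk : 1 ≤ k) {w : ℂ} (hw : 1 < w.re) :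
    ‖zetaK k w‖ ≤ ∑' m : ℕ, ((m + k : ℕ) : ℝ) ^ (-w.re) := by
  rw [zetaK_eq k hw]
  have hnorm : ∀ m : ℕ, ‖((m + k : ℕ) : ℂ) ^ (-w)‖ = ((m + k : ℕ) : ℝ) ^ (-w.re) := by
    intro m
    have hpos : (0:ℝ) < ((m + k : ℕ) : ℝ) := by
      have : 1 ≤ m + k := le_add_of_le_right hk
      exact_mod_cast Nat.lt_of_lt_of_le Nat.zero_lt_one this
    rw [← Complex.ofReal_natCast,
      Complex.norm_cpow_eq_rpow_re_of_pos hpos, Complex.neg_re]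
  have hs' : Summable (fun m : ℕ => ‖((m + k : ℕ) : ℂ) ^ (-w)‖) := by
    refine (tail_summable k hw).congr fun m => (hnorm m).symm
  calc ‖∑' m : ℕ, ((m + k : ℕ) : ℂ) ^ (-w)‖
      = ‖∑' m : ℕ, ((m + k : ℕ) : ℂ) ^ (-w)‖ := rfl
    _ ≤ ∑' m : ℕ, ‖((m + k : ℕ) : ℂ) ^ (-w)‖ := norm_tsum_le_tsum_norm hs'
    _ = ∑' m : ℕ, ((m + k : ℕ) : ℝ) ^ (-w.re) := tsum_congr hnorm

lemma tail_bound (k : ℕ) (hk : 1 ≤ k) {σ : ℝ} (hσ : 1 < σ) (N : ℕ) :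
    ∑' m : ℕ, ((m + k : ℕ) : ℝ) ^ (-(σ + N))
      ≤ (∑' m : ℕ, ((m : ℝ) + 1) ^ (-σ)) * ((k : ℝ)⁻¹) ^ N := by
  rw [← tsum_mul_right]
  have hr : 1 < σ + N := by
    have : (0:ℝ) ≤ N := Nat.cast_nonneg N
    linarith
  refine Summable.tsum_le_tsum ?_ (tail_summable k hr) ((hA_summable hσ).mul_right _)
  intro m
  have hk1 : (1:ℝ) ≤ (k:ℝ) := by exact_mod_cast hk
  have hM1 : ((m:ℝ)) + 1 ≤ ((m + k : ℕ) : ℝ) := by push_cast; linarith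
  have hMpos : (0:ℝ) < ((m + k : ℕ) : ℝ) := by positivity
  have hsplit : ((m + k : ℕ) : ℝ) ^ (-(σ + N))
      = ((m + k : ℕ) : ℝ) ^ (-σ) * ((m + k : ℕ) : ℝ) ^ (-(N:ℝ)) := by
    rw [← Real.rpow_add hMpos]
    ring_nf
  rw [hsplit]
  have h1 : ((m + k : ℕ) : ℝ) ^ (-σ) ≤ ((m:ℝ) + 1) ^ (-σ) :=
    Real.rpow_le_rpow_of_nonpos (by positivity) hM1 (by linarith)
  have h2 : ((m + k : ℕ) : ℝ) ^ (-(N:ℝ)) ≤ ((k:ℝ)⁻¹) ^ N := by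
    rw [Real.rpow_neg hMpos.le, Real.rpow_natCast, inv_pow]
    apply inv_anti₀ (by positivity)
    apply pow_le_pow_left₀ (by linarith) (by push_cast; linarith)
  exact mul_le_mul h1 h2 (Real.rpow_nonneg hMpos.le _) (Real.rpow_nonneg (by positivity) _)

theorem stmt_3 (k : ℕ) (hk : 1 ≤ k) (s : ℂ) (hs : 1 < s.re)
    (α : ℂ) (hα : ‖α‖ < k) :
    ∑' n : ℕ, ‖c (n + 1) k s‖ * ‖α‖ ^ (n + 1) /
        ((n + 1).factorial : ℝ)
      ≤ (∑' m : ℕ, ((m : ℝ) + 1) ^ (-s.re)) *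
        (1 - ‖α‖ / k) ^ (-‖s‖) := by
  set a := ‖s‖ with ha
  set x := ‖α‖ / k with hxdef
  set A := ∑' m : ℕ, ((m : ℝ) + 1) ^ (-s.re) with hA
  have hk0 : (0:ℝ) < k := by exact_mod_cast Nat.lt_of_lt_of_le Nat.zero_lt_one hk
  have hx0 : 0 ≤ x := div_nonneg (norm_nonneg α) hk0.le
  have hx1 : x < 1 := (div_lt_one hk0).mpr hα
  have hA0 : 0 ≤ A := tsum_nonneg fun m => Real.rpow_nonneg (by positivity) _
  have ha0 : 0 ≤ a := norm_nonneg s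
  have hterm : ∀ n : ℕ,
      ‖c (n + 1) k s‖ * ‖α‖ ^ (n + 1) / ((n + 1).factorial : ℝ)
      ≤ A * (bcoef a (n + 1) * x ^ (n + 1)) := by
    intro n
    set N := n + 1 with hN
    have hwre : 1 < (s + (N : ℕ)).re := by
      rw [Complex.add_re, Complex.natCast_re]
      have : (0:ℝ) ≤ N := Nat.cast_nonneg N
      linarith
    have hz : ‖zetaK k (s + (N : ℕ))‖ ≤ A * ((k : ℝ)⁻¹) ^ N := by
      calc ‖zetaK k (s + (N : ℕ))‖
          ≤ ∑' m : ℕ, ((m + k : ℕ) : ℝ) ^ (-(s + (N : ℕ)).re) := zetaK_abs_le k hk hwre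
        _ = ∑' m : ℕ, ((m + k : ℕ) : ℝ) ^ (-(s.re + N)) := by
            rw [Complex.add_re, Complex.natCast_re]
        _ ≤ A * ((k : ℝ)⁻¹) ^ N := tail_bound k hk hs N
    have hp : ‖∏ j ∈ Finset.range N, (s + j)‖
        ≤ ∏ j ∈ Finset.range N, (a + j) := by
      rw [norm_prod]
      refine Finset.prod_le_prod (fun j _ => norm_nonneg _) fun j _ => ?_
      calc ‖s + j‖ ≤ ‖s‖ + ‖(j : ℂ)‖ := norm_add_le _ _
        _ = a + j := by rw [Complex.norm_natCast]
    have hF : (0:ℝ) < (N.factorial : ℝ) := by exact_mod_cast N.factorial_pos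
    have hprod0 : (0:ℝ) ≤ ∏ j ∈ Finset.range N, (a + j) :=
      Finset.prod_nonneg fun j _ => by positivity
    rw [c, norm_mul]
    have step1 : ‖∏ j ∈ Finset.range N, (s + j)‖ *
          ‖zetaK k (s + (N : ℕ))‖ * ‖α‖ ^ N / (N.factorial : ℝ)
        ≤ (∏ j ∈ Finset.range N, (a + j)) * (A * ((k : ℝ)⁻¹) ^ N) * ‖α‖ ^ N /
          (N.factorial : ℝ) := by
      gcongr
    refine step1.trans (le_of_eq ?_)
    rw [bcoef, hxdef, div_pow]
    have hk0' : (k : ℝ) ^ N * ((k : ℝ)⁻¹) ^ N = 1 := by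
      rw [← mul_pow, mul_inv_cancel₀ hk0.ne', one_pow]
    field_simp
    linear_combination ((∏ j ∈ Finset.range N, (a + j)) * A * ‖α‖ ^ N) * hk0'
  refine Real.tsum_le_of_sum_range_le (fun n => by positivity) fun M => ?_
  calc ∑ n ∈ Finset.range M, ‖c (n + 1) k s‖ * ‖α‖ ^ (n + 1) /
        ((n + 1).factorial : ℝ)
      ≤ ∑ n ∈ Finset.range M, A * (bcoef a (n + 1) * x ^ (n + 1)) :=
        Finset.sum_le_sum fun n _ => hterm n
    _ = A * ∑ n ∈ Finset.range M, bcoef a (n + 1) * x ^ (n + 1) := by rw [Finset.mul_sum]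
    _ ≤ A * Spoly a x M := by
        apply mul_le_mul_of_nonneg_left _ hA0
        have hsum : Spoly a x M
            = ∑ n ∈ Finset.range M, bcoef a (n + 1) * x ^ (n + 1) + bcoef a 0 * x ^ 0 := by
          rw [Spoly, Finset.sum_range_succ']
        rw [hsum, bcoef_zero]
        nlinarith
    _ ≤ A * (1 - x) ^ (-a) := mul_le_mul_of_nonneg_left (Spoly_le ha0 hx0 hx1 M) hA0
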